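/- Let G be a finite cyclic group generated by a of prime order p, R a domain with field of fractions F, and M an RG-module free of finite R-rank affording a representation Γ. If the matrix Γ(a) does not have 1 as an eigenvalue (equivalently, a - 1 acts invertibly on F ⊗_R M), then H¹(G, (F⊗_R M)/M) is trivial. -/

import Mathlib

/-- The group of 1-cocycles `f : G → W ⧸ N`, where the `G`-action on the quotient
is induced (via representatives) by additive maps `act g : W →+ W` preserving `N`. -/
def oneCocycles {G W : Type*} [Group G] [AddCommGroup W] (act : G → W →+ W)
    (N : AddSubgroup W) (hN : ∀ g : G, ∀ w ∈ N, act g w ∈ N) :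
    AddSubgroup (G → W ⧸ N) where
  carrier := {f | ∀ x y : G, ∀ v : W, (QuotientAddGroup.mk v : W ⧸ N) = f y →
      f (x * y) = QuotientAddGroup.mk (act x v) + f x}
  zero_mem' := by
    intro x y v hv
    have hv0 : (QuotientAddGroup.mk v : W ⧸ N) = 0 := by simpa using hv
    have hvN : v ∈ N := (QuotientAddGroup.eq_zero_iff v).mp hv0
    have h : (QuotientAddGroup.mk (act x v) : W ⧸ N) = 0 :=
      (QuotientAddGroup.eq_zero_iff _).mpr (hN x v hvN)
    show (0 : W ⧸ N) = _ + (0 : W ⧸ N)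
    rw [h, add_zero]
  add_mem' := by
    intro f g hf hg x y v hv
    obtain ⟨v₁, hv₁⟩ := QuotientAddGroup.mk_surjective (f y)
    have hv₂ : (QuotientAddGroup.mk (v - v₁) : W ⧸ N) = g y := by
      rw [QuotientAddGroup.mk_sub, hv₁, hv]
      show (f y + g y) - f y = g y
      abel
    have h1 := hf x y v₁ hv₁
    have h2 := hg x y (v - v₁) hv₂
    show f (x * y) + g (x * y) = _ + (f x + g x)
    rw [h1, h2]
    have : act x v = act x v₁ + act x (v - v₁) := by rw [← map_add]; congr 1; abel
    rw [this, QuotientAddGroup.mk_add]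
    abel
  neg_mem' := by
    intro f hf x y v hv
    have hv' : (QuotientAddGroup.mk (-v) : W ⧸ N) = f y := by
      rw [QuotientAddGroup.mk_neg, hv]
      show -(-(f y)) = f y
      abel
    have h1 := hf x y (-v) hv'
    show -(f (x * y)) = _ + -(f x)
    rw [h1, map_neg, QuotientAddGroup.mk_neg]
    abel

/-- The group of 1-coboundaries `g ↦ (g-1)•w + N`. -/
def oneCoboundaries {G W : Type*} [Group G] [AddCommGroup W] (act : G → W →+ W)
    (N : AddSubgroup W) : AddSubgroup (G → W ⧸ N) where
  carrier := {f | ∃ w : W, ∀ g : G, f g = QuotientAddGroup.mk (act g w - w)}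
  zero_mem' := ⟨0, by simp⟩
  add_mem' := by
    rintro f g ⟨w₁, h₁⟩ ⟨w₂, h₂⟩
    refine ⟨w₁ + w₂, fun x => ?_⟩
    show f x + g x = _
    rw [h₁, h₂, ← QuotientAddGroup.mk_add]
    congr 1
    rw [map_add]
    abel
  neg_mem' := by
    rintro f ⟨w, h⟩
    refine ⟨-w, fun x => ?_⟩
    show -(f x) = _
    rw [h, ← QuotientAddGroup.mk_neg]
    congr 1
    rw [map_neg]
    abel

/-- First cohomology `H¹(G, W ⧸ N)` as cocycles modulo coboundaries. -/
def H1 {G W : Type*} [Group G] [AddCommGroup W] (act : G → W →+ W)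
    (N : AddSubgroup W) (hN : ∀ g : G, ∀ w ∈ N, act g w ∈ N) : Type _ :=
  oneCocycles act N hN ⧸ ((oneCoboundaries act N).addSubgroupOf (oneCocycles act N hN))

noncomputable instance {G W : Type*} [Group G] [AddCommGroup W] (act : G → W →+ W)
    (N : AddSubgroup W) (hN : ∀ g : G, ∀ w ∈ N, act g w ∈ N) :
    AddCommGroup (H1 act N hN) :=
  QuotientAddGroup.Quotient.addCommGroup _

/-- Let `G = ⟨a | a^p = 1⟩` with `p` prime, `R` a domain with
fraction field `F`, `M ⊆ V = F ⊗ M` an `RG`-lattice. If `a - 1` acts invertibly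
on `V` (i.e. `Γ(a)` does not have eigenvalue `1`), then `H¹(G, V/M)` is trivial. -/
theorem stmt_3 (p : ℕ) (hp : p.Prime) (R : Type*) [CommRing R] [IsDomain R]
    (V : Type*) [AddCommGroup V]
    [Module (FractionRing R) V] [Module R V] [IsScalarTower R (FractionRing R) V]
    [DistribMulAction (Multiplicative (ZMod p)) V]
    [SMulCommClass (Multiplicative (ZMod p)) (FractionRing R) V]
    (M : Submodule R V)
    (hM : ∀ (g : Multiplicative (ZMod p)), ∀ v ∈ M, g • v ∈ M)
    (hspan : Submodule.span (FractionRing R) (M : Set V) = ⊤)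
    [Module.Free R M] [Module.Finite R M]
    (hinv : Function.Bijective
      (fun v : V => (Multiplicative.ofAdd (1 : ZMod p)) • v - v)) :
    Subsingleton
      (H1 (fun g : Multiplicative (ZMod p) => DistribMulAction.toAddMonoidHom V g)
        M.toAddSubgroup (fun g w hw => hM g w hw)) := by
  haveI : NeZero p := ⟨hp.ne_zero⟩
  set G := Multiplicative (ZMod p) with hG
  set act : G → V →+ V := fun g => DistribMulAction.toAddMonoidHom V g with hact
  set N := M.toAddSubgroup with hNdef
  have hN : ∀ g : G, ∀ w ∈ N, act g w ∈ N := fun g w hw => hM g w hw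
  have key : ∀ f : oneCocycles act N hN, (f : G → V ⧸ N) ∈ oneCoboundaries act N := by
    rintro ⟨f, hf⟩
    dsimp only
    obtain ⟨v1, hv1⟩ := QuotientAddGroup.mk_surjective (f 1)
    have hone : f 1 = 0 := by
      have h := hf 1 1 v1 hv1
      rw [one_mul] at h
      have hact1 : act (1 : G) v1 = v1 := one_smul _ _
      rw [hact1, hv1] at h
      exact right_eq_add.mp h
    set a : G := Multiplicative.ofAdd (1 : ZMod p) with ha
    obtain ⟨va, hva⟩ := QuotientAddGroup.mk_surjective (f a)
    obtain ⟨w, hw⟩ := hinv.2 va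
    refine ⟨w, ?_⟩
    have hpow : ∀ n : ℕ, f (a ^ n) = QuotientAddGroup.mk (act (a ^ n) w - w) := by
      intro n
      induction n with
      | zero =>
        rw [pow_zero, hone]
        have h1 : act (1 : G) w = w := one_smul _ _
        rw [h1, sub_self]
        simp
      | succ n ih =>
        have hstep := hf a (a ^ n) (act (a ^ n) w - w) ih.symm
        rw [pow_succ', hstep, ← hva, ← hw, ← QuotientAddGroup.mk_add]
        congr 1
        show a • ((a ^ n) • w - w) + (a • w - w) = (a * a ^ n) • w - w
        rw [smul_sub, mul_smul]
        abel
    intro g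
    have hg : g = a ^ (Multiplicative.toAdd g).val := by
      apply Multiplicative.toAdd.injective
      rw [toAdd_pow]
      have h1 : Multiplicative.toAdd a = (1 : ZMod p) := rfl
      rw [h1, nsmul_eq_mul, mul_one]
      exact (ZMod.natCast_rightInverse _).symm
    rw [hg]
    exact hpow _
  constructor
  intro x y
  show x = y
  induction x using QuotientAddGroup.induction_on with
  | H f =>
    induction y using QuotientAddGroup.induction_on with
    | H f' =>
      have h1 : (QuotientAddGroup.mk f : H1 act N hN) = 0 :=
        (QuotientAddGroup.eq_zero_iff f).mpr
          ((AddSubgroup.mem_addSubgroupOf).mpr (key f))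
      have h2 : (QuotientAddGroup.mk f' : H1 act N hN) = 0 :=
        (QuotientAddGroup.eq_zero_iff f').mpr
          ((AddSubgroup.mem_addSubgroupOf).mpr (key f'))
      rw [h1, h2]
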